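/- Let X = {x_1,...,x_n} ⊂ ℝ². A point s is the minimiser of P(s) = Σ_i ‖s - x_i‖² + max_i ‖s - x_i‖² if and only if there exist nonnegative multipliers λ_1,...,λ_n summing to 1 such that s = Σ_j λ_j M_j and, for each j with λ_j > 0, ‖s - x_j‖ = max_i ‖s - x_i‖, where M_j = (1/(n+1))(x_j + Σ_i x_i). -/

import Mathlib

open Finset
variable {E : Type*} [NormedAddCommGroup E] [InnerProductSpace ℝ E]

lemma aux_pt (s t y : E) :
    ‖t - y‖ ^ 2 = ‖t - s‖ ^ 2 + 2 * (inner ℝ (t - s) (s - y) : ℝ) + ‖s - y‖ ^ 2 := by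
  rw [show t - y = (t - s) + (s - y) by abel]
  exact norm_add_sq_real _ _

lemma aux_quad {n : ℕ} (x : Fin n → E) (Mc : Fin n → E)
    (hMc : ∀ j, Mc j = ((n : ℝ) + 1)⁻¹ • (x j + ∑ i, x i)) (s t : E) (j : Fin n) :
    (∑ i, ‖t - x i‖ ^ 2) + ‖t - x j‖ ^ 2 =
      ((∑ i, ‖s - x i‖ ^ 2) + ‖s - x j‖ ^ 2) + ((n : ℝ) + 1) * ‖t - s‖ ^ 2
        + 2 * ((n : ℝ) + 1) * (inner ℝ (t - s) (s - Mc j) : ℝ) := by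
  have hn : ((n : ℝ) + 1) ≠ 0 := by positivity
  obtain ⟨u, hu⟩ : ∃ u, u = t - s := ⟨_, rfl⟩
  have h1 : (inner ℝ u (s - Mc j) : ℝ)
      = inner ℝ u s - ((n : ℝ) + 1)⁻¹ * ((inner ℝ u (x j) : ℝ) + ∑ i, (inner ℝ u (x i) : ℝ)) := by
    rw [hMc, inner_sub_right, real_inner_smul_right, inner_add_right, inner_sum]
  have hpt : ∀ y : E, ‖t - y‖ ^ 2 = ‖u‖ ^ 2 + 2 * (inner ℝ u (s - y) : ℝ) + ‖s - y‖ ^ 2 := by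
    intro y; rw [hu]; exact aux_pt s t y
  rw [← hu]
  simp only [hpt, Finset.sum_add_distrib, Finset.sum_const, card_univ, Fintype.card_fin,
    nsmul_eq_mul, inner_sub_right, Finset.mul_sum, h1]
  simp only [mul_sub, Finset.sum_sub_distrib, Finset.sum_const, card_univ, Fintype.card_fin, nsmul_eq_mul, ← Finset.mul_sum]
  field_simp
  ring
open Finset

lemma aux_sup_sq {n : ℕ} [NeZero n] (f : Fin n → ℝ) (hf : ∀ i, 0 ≤ f i) :
    Finset.univ.sup' Finset.univ_nonempty (fun i => f i ^ 2)
      = (Finset.univ.sup' Finset.univ_nonempty f) ^ 2 := by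
  apply le_antisymm
  · apply Finset.sup'_le
    intro i _
    exact pow_le_pow_left₀ (hf i) (Finset.le_sup' f (Finset.mem_univ i)) 2
  · obtain ⟨j, -, hj⟩ := Finset.exists_mem_eq_sup' Finset.univ_nonempty f
    rw [hj]
    exact Finset.le_sup' (fun i => f i ^ 2) (Finset.mem_univ j)

lemma aux_add_sup {n : ℕ} [NeZero n] (c : ℝ) (f : Fin n → ℝ) :
    c + Finset.univ.sup' Finset.univ_nonempty f
      = Finset.univ.sup' Finset.univ_nonempty (fun i => c + f i) := by
  apply le_antisymm
  · obtain ⟨j, -, hj⟩ := Finset.exists_mem_eq_sup' Finset.univ_nonempty f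
    rw [hj]
    exact Finset.le_sup' (fun i => c + f i) (Finset.mem_univ j)
  · apply Finset.sup'_le
    intro i _
    exact add_le_add_right (Finset.le_sup' f (Finset.mem_univ i)) c

set_option maxHeartbeats 1000000 in
theorem minPower_centre_iff_KKT
    {n : ℕ} [NeZero n] (x : Fin n → EuclideanSpace ℝ (Fin 2))
    (P : EuclideanSpace ℝ (Fin 2) → ℝ)
    (hP : ∀ s, P s = (∑ i, ‖s - x i‖ ^ 2) +
      Finset.univ.sup' Finset.univ_nonempty (fun i => ‖s - x i‖ ^ 2))
    (Mc : Fin n → EuclideanSpace ℝ (Fin 2))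
    (hMc : ∀ j, Mc j = ((n : ℝ) + 1)⁻¹ • (x j + ∑ i, x i))
    (s : EuclideanSpace ℝ (Fin 2)) :
    (∀ t, P s ≤ P t) ↔
    ∃ lam : Fin n → ℝ, (∀ j, 0 ≤ lam j) ∧ (∑ j, lam j = 1) ∧
      s = ∑ j, lam j • Mc j ∧
      ∀ j, 0 < lam j →
        ‖s - x j‖ = Finset.univ.sup' Finset.univ_nonempty (fun i => ‖s - x i‖) := by
  classical
  have hn1 : (0:ℝ) < (n:ℝ) + 1 := by positivity
  set m := Finset.univ.sup' Finset.univ_nonempty (fun i => ‖s - x i‖) with hm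
  have hPs : P s = (∑ i, ‖s - x i‖ ^ 2) + m ^ 2 := by
    rw [hP s, hm, aux_sup_sq _ (fun i => norm_nonneg _)]
  constructor
  · intro hmin
    have hPsup : ∀ t, P t = Finset.univ.sup' Finset.univ_nonempty
        (fun j => (∑ i, ‖t - x i‖ ^ 2) + ‖t - x j‖ ^ 2) := fun t => by
      rw [hP t, aux_add_sup]
    set A : Finset (Fin n) := Finset.univ.filter (fun j => ‖s - x j‖ = m) with hA
    have hhj : ∀ j ∈ A, (∑ i, ‖s - x i‖ ^ 2) + ‖s - x j‖ ^ 2 = P s := by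
      intro j hj
      rw [Finset.mem_filter] at hj
      rw [hj.2, hPs]
    have hhj' : ∀ j, j ∉ A → (∑ i, ‖s - x i‖ ^ 2) + ‖s - x j‖ ^ 2 < P s := by
      intro j hj
      rw [hA, Finset.mem_filter] at hj
      push_neg at hj
      have hle : ‖s - x j‖ ≤ m := Finset.le_sup' (fun i => ‖s - x i‖) (Finset.mem_univ j)
      have hlt : ‖s - x j‖ < m := lt_of_le_of_ne hle (hj (Finset.mem_univ j))
      rw [hPs]
      exact add_lt_add_right (by nlinarith [norm_nonneg (s - x j)]) _
    have hmem : s ∈ convexHull ℝ (Mc '' (A : Set (Fin n))) := by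
      by_contra hsC
      have hCcl : IsClosed (convexHull ℝ (Mc '' (A : Set (Fin n)))) :=
        ((A.finite_toSet.image Mc).isCompact_convexHull ℝ).isClosed
      obtain ⟨f, u, hfs, hfb⟩ :=
        geometric_hahn_banach_point_closed (convex_convexHull ℝ _) hCcl hsC
      set d := (InnerProductSpace.toDual ℝ (EuclideanSpace ℝ (Fin 2))).symm f with hd
      have hdy : ∀ y, (inner ℝ d y : ℝ) = f y := fun y =>
        InnerProductSpace.toDual_symm_apply
      have hquad : ∀ (j : Fin n) (ε : ℝ),
          (∑ i, ‖(s + ε • d) - x i‖ ^ 2) + ‖(s + ε • d) - x j‖ ^ 2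
            = ((∑ i, ‖s - x i‖ ^ 2) + ‖s - x j‖ ^ 2)
              + ((n:ℝ)+1) * (ε^2 * ‖d‖^2) + 2*((n:ℝ)+1) * (ε * (f s - f (Mc j))) := by
        intro j ε
        rw [aux_quad x Mc hMc s (s + ε • d) j]
        have e1 : s + ε • d - s = ε • d := by abel
        have e2 : ‖ε • d‖ ^ 2 = ε ^ 2 * ‖d‖ ^ 2 := by
          rw [norm_smul, mul_pow, Real.norm_eq_abs, sq_abs]
        have e3 : (inner ℝ (ε • d) (s - Mc j) : ℝ) = ε * (f s - f (Mc j)) := by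
          rw [real_inner_smul_left, hdy, map_sub]
        rw [e1, e2, e3]
      have key : ∀ j : Fin n, ∃ e : ℝ, 0 < e ∧ ∀ ε : ℝ, 0 < ε → ε ≤ e →
          (∑ i, ‖(s + ε • d) - x i‖ ^ 2) + ‖(s + ε • d) - x j‖ ^ 2 < P s := by
        intro j
        by_cases hjA : j ∈ A
        · have hMcj : u < f (Mc j) :=
            hfb _ (subset_convexHull ℝ _ ⟨j, Finset.mem_coe.2 hjA, rfl⟩)
          have hδ : 0 < u - f s := by linarith
          refine ⟨(u - f s) / (‖d‖ ^ 2 + 1), by positivity, fun ε hε hεe => ?_⟩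
          rw [hquad j ε, hhj j hjA]
          have h1 : ε * (‖d‖ ^ 2 + 1) ≤ u - f s :=
            (le_div_iff₀ (by positivity)).1 hεe
          have q1 : ε * (ε * (‖d‖ ^ 2 + 1)) ≤ ε * (u - f s) :=
            mul_le_mul_of_nonneg_left h1 hε.le
          have q2 : ε * (f s - f (Mc j)) < ε * (-(u - f s)) :=
            mul_lt_mul_of_pos_left (by linarith) hε
          have kneg : ε ^ 2 * ‖d‖ ^ 2 + 2 * (ε * (f s - f (Mc j))) < 0 := by
            nlinarith [q1, q2, mul_pos hε hδ, sq_nonneg ε]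
          nlinarith [mul_neg_of_pos_of_neg hn1 kneg]
        · have hγ : 0 < P s - ((∑ i, ‖s - x i‖ ^ 2) + ‖s - x j‖ ^ 2) := by
            linarith [hhj' j hjA]
          set c := f s - f (Mc j) with hc
          refine ⟨min 1 ((P s - ((∑ i, ‖s - x i‖ ^ 2) + ‖s - x j‖ ^ 2)) /
              (((n:ℝ)+1) * (‖d‖ ^ 2 + 2 * |c| + 1))), lt_min one_pos (by positivity),
            fun ε hε hεe => ?_⟩
          rw [hquad j ε]
          have hε1 : ε ≤ 1 := hεe.trans (min_le_left _ _)
          have hε2 : ε * (((n:ℝ)+1) * (‖d‖ ^ 2 + 2 * |c| + 1))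
              ≤ P s - ((∑ i, ‖s - x i‖ ^ 2) + ‖s - x j‖ ^ 2) := by
            rw [← le_div_iff₀ (by positivity)]
            exact hεe.trans (min_le_right _ _)
          have habs : c ≤ |c| := le_abs_self c
          have hsq : ε ^ 2 ≤ ε := by nlinarith
          have k1 : ε ^ 2 * ‖d‖ ^ 2 ≤ ε * ‖d‖ ^ 2 :=
            mul_le_mul_of_nonneg_right hsq (sq_nonneg _)
          have k2 : ε * c ≤ ε * |c| := mul_le_mul_of_nonneg_left habs (le_of_lt hε)
          nlinarith [mul_le_mul_of_nonneg_left k1 (le_of_lt hn1),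
            mul_le_mul_of_nonneg_left k2 (le_of_lt hn1), mul_pos hε hn1]
      choose ef hef0 hef using key
      have hε0 : 0 < Finset.univ.inf' Finset.univ_nonempty ef :=
        (Finset.lt_inf'_iff _).2 fun j _ => hef0 j
      have hlt : P (s + (Finset.univ.inf' Finset.univ_nonempty ef) • d) < P s := by
        rw [hPsup]
        refine (Finset.sup'_lt_iff _).2 fun j _ => ?_
        exact hef j _ hε0 (Finset.inf'_le ef (Finset.mem_univ j))
      exact absurd (hmin _) (not_le.2 hlt)
    -- extract lam
    have hconv : Convex ℝ {y : EuclideanSpace ℝ (Fin 2) |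
        ∃ lam : Fin n → ℝ, (∀ j, 0 ≤ lam j) ∧ (∑ j, lam j = 1) ∧
          y = ∑ j, lam j • Mc j ∧ ∀ j, 0 < lam j → ‖s - x j‖ = m} := by
      rintro y ⟨lam, h0, h1, rfl, h3⟩ z ⟨lam', h0', h1', rfl, h3'⟩ a b ha hb hab
      refine ⟨fun j => a * lam j + b * lam' j,
        fun j => add_nonneg (mul_nonneg ha (h0 j)) (mul_nonneg hb (h0' j)), ?_, ?_, ?_⟩
      · rw [Finset.sum_add_distrib, ← Finset.mul_sum, ← Finset.mul_sum, h1, h1']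
        simpa using hab
      · simp only [add_smul, mul_smul, Finset.sum_add_distrib, Finset.smul_sum]
      · intro j hj
        have hj' : 0 < a * lam j + b * lam' j := hj
        rcases lt_or_ge 0 (a * lam j) with h | h
        · refine h3 j ?_
          rcases (h0 j).lt_or_eq with h' | h'
          · exact h'
          · exfalso; rw [← h', mul_zero] at h; exact lt_irrefl 0 h
        · have : 0 < b * lam' j := by linarith
          refine h3' j ?_
          rcases (h0' j).lt_or_eq with h' | h'
          · exact h'
          · exfalso; rw [← h', mul_zero] at this; exact lt_irrefl 0 this
    have hsub : Mc '' (A : Set (Fin n)) ⊆ {y : EuclideanSpace ℝ (Fin 2) |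
        ∃ lam : Fin n → ℝ, (∀ j, 0 ≤ lam j) ∧ (∑ j, lam j = 1) ∧
          y = ∑ j, lam j • Mc j ∧ ∀ j, 0 < lam j → ‖s - x j‖ = m} := by
      rintro y ⟨j, hjA, rfl⟩
      rw [Finset.mem_coe, hA, Finset.mem_filter] at hjA
      refine ⟨fun i => if i = j then 1 else 0, fun i => by positivity, by simp, by simp, ?_⟩
      intro i hi
      have : i = j := by by_contra h; simp [h] at hi
      rw [this]; exact hjA.2
    obtain ⟨lam, h0, h1, h2, h3⟩ := convexHull_min hsub hconv hmem
    exact ⟨lam, h0, h1, h2, h3⟩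
  · rintro ⟨lam, hlam0, hlam1, hs, hact⟩
    intro t
    have h3 : ∑ j, lam j * (inner ℝ (t - s) (s - Mc j) : ℝ) = 0 := by
      have e1 : ∑ j, lam j * (inner ℝ (t - s) (s - Mc j) : ℝ)
          = inner ℝ (t - s) (∑ j, lam j • (s - Mc j)) := by
        rw [inner_sum]
        exact Finset.sum_congr rfl fun j _ => (real_inner_smul_right _ _ _).symm
      have e2 : ∑ j, lam j • (s - Mc j) = (0 : EuclideanSpace ℝ (Fin 2)) := by
        have : ∀ j ∈ Finset.univ, lam j • (s - Mc j) = lam j • s - lam j • Mc j :=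
          fun j _ => smul_sub _ _ _
        rw [Finset.sum_congr rfl this, Finset.sum_sub_distrib, ← Finset.sum_smul, hlam1,
          one_smul, ← hs, sub_self]
      rw [e1, e2, inner_zero_right]
    have h4 : ∑ j, lam j * ((∑ i, ‖s - x i‖ ^ 2) + ‖s - x j‖ ^ 2) = P s := by
      have e1 : ∀ j ∈ Finset.univ, lam j * ((∑ i, ‖s - x i‖ ^ 2) + ‖s - x j‖ ^ 2)
          = lam j * ((∑ i, ‖s - x i‖ ^ 2) + m ^ 2) := by
        intro j _
        rcases (hlam0 j).eq_or_lt with h | h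
        · rw [← h]; ring
        · rw [hact j h]
      rw [Finset.sum_congr rfl e1, ← Finset.sum_mul, hlam1, one_mul, hPs]
    have h5 : ∑ j, lam j * ((∑ i, ‖t - x i‖ ^ 2) + ‖t - x j‖ ^ 2)
        = (∑ j, lam j * ((∑ i, ‖s - x i‖ ^ 2) + ‖s - x j‖ ^ 2))
          + ((n:ℝ) + 1) * ‖t - s‖ ^ 2 := by
      calc ∑ j, lam j * ((∑ i, ‖t - x i‖ ^ 2) + ‖t - x j‖ ^ 2)
          = ∑ j, (lam j * ((∑ i, ‖s - x i‖ ^ 2) + ‖s - x j‖ ^ 2)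
              + (((n:ℝ) + 1) * ‖t - s‖ ^ 2) * lam j
              + (2 * ((n:ℝ) + 1)) * (lam j * (inner ℝ (t - s) (s - Mc j) : ℝ))) := by
            refine Finset.sum_congr rfl fun j _ => ?_
            rw [aux_quad x Mc hMc s t j]; ring
        _ = _ := by
            rw [Finset.sum_add_distrib, Finset.sum_add_distrib, ← Finset.mul_sum,
              ← Finset.mul_sum, h3, mul_zero, add_zero, hlam1, mul_one]
    have h6 : ∑ j, lam j * ((∑ i, ‖t - x i‖ ^ 2) + ‖t - x j‖ ^ 2) ≤ P t := by
      rw [hP t]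
      calc ∑ j, lam j * ((∑ i, ‖t - x i‖ ^ 2) + ‖t - x j‖ ^ 2)
          ≤ ∑ j, lam j * ((∑ i, ‖t - x i‖ ^ 2)
              + Finset.univ.sup' Finset.univ_nonempty (fun i => ‖t - x i‖ ^ 2)) := by
            refine Finset.sum_le_sum fun j _ => ?_
            exact mul_le_mul_of_nonneg_left
              (add_le_add_right (Finset.le_sup' (fun i => ‖t - x i‖ ^ 2) (Finset.mem_univ j)) _)
              (hlam0 j)
        _ = _ := by rw [← Finset.sum_mul, hlam1, one_mul]
    nlinarith [sq_nonneg ‖t - s‖, h4, h5, h6]
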